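/- Let T and W be infinite, locally finite, connected, vertex-transitive simple graphs equipped with their graph metrics, with isoperimetric profiles F_T and F_W respectively. If there exists a quasi-isometry f : V(T) → V(W), then there exists a constant a > 0 such that F_W(n) ≤ a·F_T(n) for all n ≥ 1. Consequently, if T and W are quasi-isometric, then there exist constants a, b > 0 with F_W(n) ≤ a·F_T(n) and F_T(n) ≤ b·F_W(n) for all n ≥ 1 (that is, F_T ∼ F_W). -/

import Mathlib

/-- `T` is vertex-transitive. -/
def VertexTransitive {V : Type*} (T : SimpleGraph V) : Prop :=
  ∀ u v : V, ∃ φ : T ≃g T, φ u = v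

/-- The (vertex) boundary of a set of vertices. -/
def vertexBoundary {V : Type*} (T : SimpleGraph V) (A : Set V) : Set V :=
  {v | v ∉ A ∧ ∃ a ∈ A, T.Adj a v}

/-- The isoperimetric profile. -/
noncomputable def isoProfile {V : Type*} (T : SimpleGraph V) (n : ℕ) : ℕ :=
  sInf {k | ∃ A : Set V, A.Finite ∧ n ≤ A.ncard ∧ (vertexBoundary T A).ncard = k}

/-- `f` is a `(C, K)`-quasi-isometry between the graph metrics of `T` and `W`. -/
def IsQuasiIsometry {VT VW : Type*} (T : SimpleGraph VT) (W : SimpleGraph VW)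
    (f : VT → VW) (C K : ℝ) : Prop :=
  1 ≤ C ∧ 0 ≤ K ∧
  (∀ x x' : VT,
    (1 / C) * (T.dist x x' : ℝ) - K ≤ (W.dist (f x) (f x') : ℝ) ∧
    (W.dist (f x) (f x') : ℝ) ≤ C * (T.dist x x' : ℝ) + K) ∧
  (∀ y : VW, ∃ x : VT, (W.dist (f x) y : ℝ) ≤ K)


namespace QIAux
open SimpleGraph Set

variable {V : Type*} {G : SimpleGraph V}

/-- The ball of radius `r` around `v`. -/
def gball (G : SimpleGraph V) (v : V) (r : ℕ) : Set V := {w | G.dist v w ≤ r}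

lemma mem_gball_self (v : V) (r : ℕ) : v ∈ gball G v r := by
  simp [gball, SimpleGraph.dist_self]

lemma iso_dist (hc : G.Connected) (φ : G ≃g G) (u v : V) :
    G.dist (φ u) (φ v) = G.dist u v := by
  have key : ∀ (ψ : G ≃g G) (a b : V), G.dist (ψ a) (ψ b) ≤ G.dist a b := by
    intro ψ a b
    obtain ⟨p, hp⟩ := hc.exists_walk_length_eq_dist a b
    calc G.dist (ψ a) (ψ b) ≤ (p.map ψ.toHom).length := SimpleGraph.dist_le _
      _ = G.dist a b := by rw [SimpleGraph.Walk.length_map, hp]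
  refine le_antisymm (key φ u v) ?_
  have := key φ.symm (φ u) (φ v)
  simpa using this

lemma gball_finite (hc : G.Connected) (hlf : ∀ v : V, (G.neighborSet v).Finite)
    (v : V) (r : ℕ) : (gball G v r).Finite := by
  induction r with
  | zero =>
    refine Set.Finite.subset (Set.finite_singleton v) ?_
    intro w hw
    have : G.dist v w = 0 := Nat.le_zero.mp hw
    have : v = w := (hc.dist_eq_zero_iff).mp this
    simp [this]
  | succ r ih =>
    have hsub : gball G v (r+1) ⊆ gball G v r ∪ ⋃ u ∈ gball G v r, G.neighborSet u := by
      intro w hw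
      by_cases h : G.dist v w ≤ r
      · exact Or.inl h
      · right
        have hpos : G.dist v w ≠ 0 := by omega
        obtain ⟨p, hp⟩ := SimpleGraph.exists_walk_of_dist_ne_zero hpos
        have hlen : p.length ≠ 0 := by rw [hp]; exact hpos
        -- take the walk reversed: from w to v, peel off first edge
        cases hq : p.reverse with
        | nil =>
          exfalso
          have h0 : p.reverse.length = 0 := by rw [hq]; rfl
          rw [SimpleGraph.Walk.length_reverse] at h0
          exact hlen h0
        | cons hadj q =>
          rename_i u
          refine Set.mem_biUnion (?_ : u ∈ gball G v r) hadj.symm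
          have hql : q.length = p.length - 1 := by
            have := congrArg SimpleGraph.Walk.length hq
            simp at this
            omega
          have : G.dist v u ≤ q.reverse.length := SimpleGraph.dist_le _
          simp only [SimpleGraph.Walk.length_reverse] at this
          have hw' : G.dist v w ≤ r + 1 := hw
          rw [hql, hp] at this
          simp only [gball, Set.mem_setOf_eq]
          omega
    exact Set.Finite.subset (ih.union (Set.Finite.biUnion ih (fun u _ => hlf u))) hsub

lemma gball_image (hc : G.Connected) (φ : G ≃g G) (v : V) (r : ℕ) :
    φ '' gball G v r = gball G (φ v) r := by
  ext w
  constructor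
  · rintro ⟨u, hu, rfl⟩
    simpa [gball, iso_dist hc φ] using hu
  · intro hw
    refine ⟨φ.symm w, ?_, by simp⟩
    have : G.dist (φ v) (φ (φ.symm w)) ≤ r := by simpa [gball] using hw
    rwa [iso_dist hc φ] at this

lemma gball_ncard (hc : G.Connected) (htrans : VertexTransitive G) (v v' : V) (r : ℕ) :
    (gball G v r).ncard = (gball G v' r).ncard := by
  obtain ⟨φ, hφ⟩ := htrans v v'
  rw [← hφ, ← gball_image hc φ v r, Set.ncard_image_of_injective _ φ.injective]


lemma boundary_finite (hlf : ∀ v : V, (G.neighborSet v).Finite) {A : Set V}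
    (hA : A.Finite) : (vertexBoundary G A).Finite := by
  refine Set.Finite.subset (Set.Finite.biUnion hA (fun a _ => hlf a)) ?_
  rintro v ⟨hv, a, ha, hadj⟩
  exact Set.mem_biUnion ha hadj

lemma boundary_image (φ : G ≃g G) (A : Set V) :
    vertexBoundary G (φ '' A) = φ '' vertexBoundary G A := by
  ext v
  constructor
  · rintro ⟨hv, a, ⟨a', ha', rfl⟩, hadj⟩
    refine ⟨φ.symm v, ⟨?_, a', ha', ?_⟩, by simp⟩
    · intro hmem
      exact hv ⟨φ.symm v, hmem, by simp⟩
    · have : G.Adj (φ a') (φ (φ.symm v)) := by simpa using hadj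
      exact (φ.map_adj_iff).mp this
  · rintro ⟨u, ⟨hu, a, ha, hadj⟩, rfl⟩
    refine ⟨?_, φ a, ⟨a, ha, rfl⟩, (φ.map_adj_iff).mpr hadj⟩
    rintro ⟨u', hu', hequ⟩
    exact hu (by rwa [φ.injective hequ] at hu')

lemma crossing (hc : G.Connected) {A : Set V} :
    ∀ {x a : V} (p : G.Walk x a), x ∉ A → a ∈ A →
      ∃ b ∈ vertexBoundary G A, G.dist x b ≤ p.length := by
  intro x a p
  induction p with
  | nil => intro hx ha; exact absurd ha hx
  | @cons x' y' a' hadj q ih =>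
    intro hx ha
    by_cases hy : y' ∈ A
    · exact ⟨x', ⟨hx, y', hy, hadj.symm⟩, by simp [SimpleGraph.dist_self]⟩
    · obtain ⟨b, hb, hdb⟩ := ih hy ha
      refine ⟨b, hb, ?_⟩
      have h1 : G.dist x' b ≤ G.dist x' y' + G.dist y' b := hc.dist_triangle
      have h2 : G.dist x' y' = 1 := SimpleGraph.dist_eq_one_iff_adj.mpr hadj
      simp only [SimpleGraph.Walk.length_cons]
      omega

lemma boundary_nonempty (hinf : Infinite V) (hc : G.Connected) {A : Set V}
    (hA : A.Finite) (hne : A.Nonempty) : (vertexBoundary G A).Nonempty := by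
  obtain ⟨a, ha⟩ := hne
  obtain ⟨v, hv⟩ := hA.infinite_compl.nonempty
  obtain ⟨p⟩ := hc v a
  obtain ⟨b, hb, _⟩ := crossing hc p hv ha
  exact ⟨b, hb⟩


lemma profile_le {A : Set V} (hA : A.Finite) {n : ℕ} (hn : n ≤ A.ncard) :
    isoProfile G n ≤ (vertexBoundary G A).ncard :=
  Nat.sInf_le ⟨A, hA, hn, rfl⟩

lemma profile_exists (hinf : Infinite V) (n : ℕ) :
    ∃ A : Set V, A.Finite ∧ n ≤ A.ncard ∧ (vertexBoundary G A).ncard = isoProfile G n := by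
  have hne : {k | ∃ A : Set V, A.Finite ∧ n ≤ A.ncard ∧
      (vertexBoundary G A).ncard = k}.Nonempty := by
    obtain ⟨A, -, hfin, hcard⟩ := (Set.infinite_univ (α := V)).exists_subset_ncard_eq n
    exact ⟨_, A, hfin, hcard.ge, rfl⟩
  exact Nat.sInf_mem hne

lemma exists_disjoint_translate (hc : G.Connected)
    (hlf : ∀ v : V, (G.neighborSet v).Finite) (htrans : VertexTransitive G)
    [Infinite V] {A S : Set V} (hA : A.Finite) (hS : S.Finite) {a₀ : V} (ha₀ : a₀ ∈ A) :
    ∃ φ : G ≃g G, Disjoint (φ '' A) S := by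
  obtain ⟨D, hD⟩ : ∃ D : ℕ, ∀ s ∈ A ∪ S, G.dist a₀ s ≤ D := by
    obtain ⟨D, hD⟩ := ((hA.union hS).image (G.dist a₀)).bddAbove
    exact ⟨D, fun s hs => hD ⟨s, hs, rfl⟩⟩
  obtain ⟨v, hv⟩ := (gball_finite hc hlf a₀ (2*D)).infinite_compl.nonempty
  obtain ⟨φ, hφ⟩ := htrans a₀ v
  refine ⟨φ, Set.disjoint_left.mpr ?_⟩
  rintro w ⟨a, ha, rfl⟩ hwS
  have h1 : G.dist v (φ a) ≤ D := by
    rw [← hφ, iso_dist hc φ]; exact hD a (Or.inl ha)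
  have h2 : ¬ G.dist a₀ v ≤ 2*D := hv
  have h3 : G.dist a₀ v ≤ G.dist a₀ (φ a) + G.dist (φ a) v := hc.dist_triangle
  have h4 : G.dist a₀ (φ a) ≤ D := hD _ (Or.inr hwS)
  rw [SimpleGraph.dist_comm (u := φ a)] at h3
  omega

lemma boundary_union_subset (A B : Set V) :
    vertexBoundary G (A ∪ B) ⊆ vertexBoundary G A ∪ vertexBoundary G B := by
  rintro v ⟨hv, a, (ha|ha), hadj⟩
  · exact Or.inl ⟨fun h => hv (Or.inl h), a, ha, hadj⟩
  · exact Or.inr ⟨fun h => hv (Or.inr h), a, ha, hadj⟩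

lemma translates (hc : G.Connected) (hlf : ∀ v : V, (G.neighborSet v).Finite)
    (htrans : VertexTransitive G) [Infinite V] {A : Set V} (hA : A.Finite)
    (hAne : A.Nonempty) (M : ℕ) :
    ∃ B : Set V, B.Finite ∧ M * A.ncard ≤ B.ncard ∧
      (vertexBoundary G B).ncard ≤ M * (vertexBoundary G A).ncard := by
  induction M with
  | zero =>
    refine ⟨∅, Set.finite_empty, by simp, ?_⟩
    have hb : vertexBoundary G (∅ : Set V) = ∅ := by
      ext v; simp [vertexBoundary]
    simp [hb]
  | succ M ih =>
    obtain ⟨B, hBfin, hBcard, hBbd⟩ := ih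
    obtain ⟨a₀, ha₀⟩ := hAne
    obtain ⟨φ, hdisj⟩ := exists_disjoint_translate hc hlf htrans hA hBfin ha₀
    refine ⟨φ '' A ∪ B, (hA.image _).union hBfin, ?_, ?_⟩
    · rw [Set.ncard_union_eq hdisj (hA.image _) hBfin,
        Set.ncard_image_of_injective _ φ.injective, Nat.succ_mul]
      omega
    · calc (vertexBoundary G (φ '' A ∪ B)).ncard
          ≤ (vertexBoundary G (φ '' A) ∪ vertexBoundary G B).ncard := by
            exact Set.ncard_le_ncard (boundary_union_subset _ _)
              ((boundary_finite hlf (hA.image _)).union (boundary_finite hlf hBfin))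
        _ ≤ (vertexBoundary G (φ '' A)).ncard + (vertexBoundary G B).ncard :=
            Set.ncard_union_le _ _
        _ ≤ (M+1) * (vertexBoundary G A).ncard := by
            rw [boundary_image, Set.ncard_image_of_injective _ φ.injective, Nat.succ_mul]
            omega


lemma oneside {VT VW : Type*} (T : SimpleGraph VT) (W : SimpleGraph VW)
    (hTinf : Infinite VT) (hTconn : T.Connected)
    (hTlf : ∀ v : VT, (T.neighborSet v).Finite) (hTtrans : VertexTransitive T)
    (hWconn : W.Connected) (hWlf : ∀ v : VW, (W.neighborSet v).Finite)
    (hWtrans : VertexTransitive W)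
    (f : VT → VW) (C K : ℝ) (hQI : IsQuasiIsometry T W f C K) :
    ∃ a : ℕ, 0 < a ∧ ∀ n : ℕ, 1 ≤ n → isoProfile W n ≤ a * isoProfile T n := by
  classical
  obtain ⟨hC1, hK0, hbd, hsur⟩ := hQI
  haveI := hTinf
  obtain ⟨t₀⟩ : Nonempty VT := inferInstance
  have hCpos : (0:ℝ) < C := lt_of_lt_of_le one_pos hC1
  -- constants
  set rT : ℕ := ⌈C * K⌉₊ with hrT
  set M : ℕ := (gball T t₀ rT).ncard with hM
  have hMfin : ∀ x : VT, (gball T x rT).Finite := fun x => gball_finite hTconn hTlf x rT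
  have hMball : ∀ x : VT, (gball T x rT).ncard = M :=
    fun x => gball_ncard hTconn hTtrans x t₀ rT
  have hMpos : 0 < M := by
    rw [hM]
    exact (Set.ncard_pos (hMfin t₀)).mpr ⟨t₀, mem_gball_self t₀ rT⟩
  set R : ℕ := ⌈2 * K⌉₊ + 1 with hR
  have hR2K : (2 * K : ℝ) ≤ R := by
    calc (2*K:ℝ) ≤ ⌈2*K⌉₊ := Nat.le_ceil _
      _ ≤ R := by rw [hR]; push_cast; linarith
  set L : ℕ := ⌈C * ((R:ℝ) + 1 + 2 * K)⌉₊ with hL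
  set S : ℕ := ⌈C * (L:ℝ) + 2 * K⌉₊ with hS
  obtain ⟨w₀⟩ : Nonempty VW := ⟨f t₀⟩
  set aW : ℕ := (gball W w₀ S).ncard with haW
  have haWball : ∀ w : VW, (gball W w S).ncard = aW :=
    fun w => gball_ncard hWconn hWtrans w w₀ S
  have haWfin : ∀ w : VW, (gball W w S).Finite := fun w => gball_finite hWconn hWlf w S
  have haWpos : 0 < aW := by
    rw [haW]
    exact (Set.ncard_pos (haWfin w₀)).mpr ⟨w₀, mem_gball_self w₀ S⟩
  refine ⟨aW * M, by positivity, ?_⟩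
  intro n hn
  obtain ⟨A₀, hA₀fin, hA₀n, hA₀bd⟩ := profile_exists (G := T) hTinf n
  have hA₀ne : A₀.Nonempty := by
    rw [← Set.ncard_pos hA₀fin]; omega
  obtain ⟨A, hAfin, hAcard, hAbd⟩ := translates hTconn hTlf hTtrans hA₀fin hA₀ne M
  have hAn : M * n ≤ A.ncard := le_trans (Nat.mul_le_mul_left M hA₀n) hAcard
  set B : Set VW := {w | ∃ a ∈ A, W.dist (f a) w ≤ R} with hB
  have hBfin : B.Finite := by
    refine Set.Finite.subset
      (Set.Finite.biUnion hAfin (fun a _ => gball_finite hWconn hWlf (f a) R)) ?_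
    rintro w ⟨a, ha, hw⟩
    exact Set.mem_biUnion ha hw
  -- fibers of f have at most M elements
  have hfiber : ∀ w : VW, (A ∩ f ⁻¹' {w}).ncard ≤ M := by
    intro w
    rcases (A ∩ f ⁻¹' {w}).eq_empty_or_nonempty with h | ⟨x, hx⟩
    · simp [h]
    · have hsub : A ∩ f ⁻¹' {w} ⊆ gball T x rT := by
        rintro x' ⟨hx'A, hx'w⟩
        have h0 : (W.dist (f x) (f x') : ℝ) = 0 := by
          have h1 : f x = w := hx.2
          have h2 : f x' = w := hx'w
          rw [h1, h2]
          simp [SimpleGraph.dist_self]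
        have hlow := (hbd x x').1
        rw [h0] at hlow
        have h5 : (1/C) * (T.dist x x' : ℝ) ≤ K := by linarith
        have h6 : C * ((1/C) * (T.dist x x' : ℝ)) ≤ C * K :=
          mul_le_mul_of_nonneg_left h5 hCpos.le
        have h7 : C * ((1/C) * (T.dist x x' : ℝ)) = (T.dist x x' : ℝ) := by
          field_simp
        have h8 : (T.dist x x' : ℝ) ≤ (rT : ℝ) := by
          rw [h7] at h6
          exact le_trans h6 (Nat.le_ceil _)
        exact_mod_cast h8
      exact le_trans (Set.ncard_le_ncard hsub (hMfin x)) (le_of_eq (hMball x))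
  have hBn : n ≤ B.ncard := by
    have hfA : f '' A ⊆ B := by
      rintro w ⟨a, ha, rfl⟩
      exact ⟨a, ha, by simp [SimpleGraph.dist_self]⟩
    have hcount : A.ncard ≤ M * (f '' A).ncard := by
      have hs : A.ncard = hAfin.toFinset.card := Set.ncard_eq_toFinset_card A hAfin
      have him : (f '' A).ncard = (hAfin.toFinset.image f).card := by
        rw [← Set.ncard_coe_finset, Finset.coe_image, Set.Finite.coe_toFinset]
      rw [hs, him]
      refine Finset.card_le_mul_card_image _ M ?_
      intro w hw
      have hset : (({a ∈ hAfin.toFinset | f a = w} : Finset VT) : Set VT)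
          = A ∩ f ⁻¹' {w} := by
        ext x
        simp [Set.mem_preimage]
      calc ({a ∈ hAfin.toFinset | f a = w} : Finset VT).card
          = (A ∩ f ⁻¹' {w}).ncard := by rw [← Set.ncard_coe_finset, hset]
        _ ≤ M := hfiber w
    have h2 : (f '' A).ncard ≤ B.ncard := Set.ncard_le_ncard hfA hBfin
    have h3 : M * n ≤ M * B.ncard :=
      le_trans hAn (le_trans hcount (Nat.mul_le_mul_left M h2))
    exact Nat.le_of_mul_le_mul_left h3 hMpos
  -- boundary of B is covered by S-balls around images of boundary of A
  have hBbd_sub : vertexBoundary W B ⊆ ⋃ b ∈ vertexBoundary T A, gball W (f b) S := by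
    rintro w ⟨hwB, w', hw'B, hadj⟩
    obtain ⟨a', ha', hda'⟩ := hw'B
    have hda'w : W.dist (f a') w ≤ R + 1 := by
      have htri : W.dist (f a') w ≤ W.dist (f a') w' + W.dist w' w := hWconn.dist_triangle
      have h1 : W.dist w' w = 1 := SimpleGraph.dist_eq_one_iff_adj.mpr hadj
      omega
    have hfar : ∀ a ∈ A, R < W.dist (f a) w := by
      intro a ha
      by_contra h
      exact hwB ⟨a, ha, by omega⟩
    obtain ⟨x, hx⟩ := hsur w
    have hxA : x ∉ A := by
      intro hxA
      have h1 := hfar x hxA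
      have h2 : (R:ℝ) < (W.dist (f x) w : ℝ) := by exact_mod_cast h1
      linarith [hR2K, hK0]
    have hdxa' : T.dist x a' ≤ L := by
      have hWd : (W.dist (f x) (f a') : ℝ) ≤ K + ((R:ℝ) + 1) := by
        have htri : W.dist (f x) (f a') ≤ W.dist (f x) w + W.dist w (f a') :=
          hWconn.dist_triangle
        have hcomm : W.dist w (f a') = W.dist (f a') w := SimpleGraph.dist_comm
        have hcast : (W.dist (f x) (f a') : ℝ)
            ≤ (W.dist (f x) w : ℝ) + (W.dist (f a') w : ℝ) := by
          rw [← hcomm]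
          exact_mod_cast htri
        have hcast2 : (W.dist (f a') w : ℝ) ≤ (R:ℝ) + 1 := by exact_mod_cast hda'w
        linarith
      have hlow := (hbd x a').1
      have h5 : (1/C) * (T.dist x a' : ℝ) ≤ (R:ℝ) + 1 + 2*K := by linarith
      have h6 : C * ((1/C) * (T.dist x a' : ℝ)) ≤ C * ((R:ℝ) + 1 + 2*K) :=
        mul_le_mul_of_nonneg_left h5 hCpos.le
      have h7 : C * ((1/C) * (T.dist x a' : ℝ)) = (T.dist x a' : ℝ) := by field_simp
      have h8 : (T.dist x a' : ℝ) ≤ (L : ℝ) := by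
        rw [h7] at h6
        exact le_trans h6 (Nat.le_ceil _)
      exact_mod_cast h8
    obtain ⟨p, hp⟩ := hTconn.exists_walk_length_eq_dist x a'
    obtain ⟨b, hb, hdb⟩ := crossing hTconn p hxA ha'
    refine Set.mem_biUnion hb ?_
    have hdxb : T.dist x b ≤ L := by omega
    have hfxfb : (W.dist (f x) (f b) : ℝ) ≤ C * (L:ℝ) + K := by
      have h1 := (hbd x b).2
      have h2 : (T.dist x b : ℝ) ≤ (L:ℝ) := by exact_mod_cast hdxb
      nlinarith
    have hfbw : (W.dist (f b) w : ℝ) ≤ (S:ℝ) := by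
      have htri : W.dist (f b) w ≤ W.dist (f b) (f x) + W.dist (f x) w :=
        hWconn.dist_triangle
      have hcomm : W.dist (f b) (f x) = W.dist (f x) (f b) := SimpleGraph.dist_comm
      have hcast : (W.dist (f b) w : ℝ)
          ≤ (W.dist (f x) (f b) : ℝ) + (W.dist (f x) w : ℝ) := by
        rw [← hcomm]
        exact_mod_cast htri
      have : (W.dist (f b) w : ℝ) ≤ C * (L:ℝ) + 2*K := by linarith
      exact le_trans this (Nat.le_ceil _)
    show W.dist (f b) w ≤ S
    exact_mod_cast hfbw
  have hbdAfin : (vertexBoundary T A).Finite := boundary_finite hTlf hAfin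
  have hBbd : (vertexBoundary W B).ncard ≤ aW * (vertexBoundary T A).ncard := by
    set F : Finset VT := hbdAfin.toFinset with hF
    have hUeq : (⋃ b ∈ vertexBoundary T A, gball W (f b) S)
        = ↑(F.biUnion fun b => (haWfin (f b)).toFinset) := by
      ext w
      simp [hF, Set.Finite.mem_toFinset]
    have h1 : (vertexBoundary W B).ncard
        ≤ ((⋃ b ∈ vertexBoundary T A, gball W (f b) S)).ncard := by
      refine Set.ncard_le_ncard hBbd_sub ?_
      rw [hUeq]
      exact (F.biUnion fun b => (haWfin (f b)).toFinset).finite_toSet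
    have h2 : ((⋃ b ∈ vertexBoundary T A, gball W (f b) S)).ncard
        ≤ F.card * aW := by
      rw [hUeq, Set.ncard_coe_finset]
      refine Finset.card_biUnion_le_card_mul _ _ _ ?_
      intro b _
      rw [← Set.ncard_eq_toFinset_card _ (haWfin (f b))]
      exact le_of_eq (haWball (f b))
    have h3 : F.card = (vertexBoundary T A).ncard :=
      (Set.ncard_eq_toFinset_card _ hbdAfin).symm
    calc (vertexBoundary W B).ncard ≤ F.card * aW := le_trans h1 h2
      _ = aW * (vertexBoundary T A).ncard := by rw [h3, Nat.mul_comm]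
  calc isoProfile W n ≤ (vertexBoundary W B).ncard := profile_le hBfin hBn
    _ ≤ aW * (vertexBoundary T A).ncard := hBbd
    _ ≤ aW * (M * isoProfile T n) := by
        refine Nat.mul_le_mul_left aW ?_
        rw [← hA₀bd]
        exact hAbd
    _ = aW * M * isoProfile T n := by rw [Nat.mul_assoc]

end QIAux

theorem isoProfile_quasiIsometry_invariant {VT VW : Type*}
    (T : SimpleGraph VT) (W : SimpleGraph VW)
    (hTinf : Infinite VT) (hTconn : T.Connected)
    (hTlf : ∀ v : VT, (T.neighborSet v).Finite) (hTtrans : VertexTransitive T)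
    (hWinf : Infinite VW) (hWconn : W.Connected)
    (hWlf : ∀ v : VW, (W.neighborSet v).Finite) (hWtrans : VertexTransitive W)
    (hf : ∃ (f : VT → VW) (C K : ℝ), IsQuasiIsometry T W f C K) :
    (∃ a : ℕ, 0 < a ∧ ∀ n : ℕ, 1 ≤ n → isoProfile W n ≤ a * isoProfile T n) ∧
    ((∃ (g : VW → VT) (C K : ℝ), IsQuasiIsometry W T g C K) →
      ∃ b : ℕ, 0 < b ∧ ∀ n : ℕ, 1 ≤ n → isoProfile T n ≤ b * isoProfile W n) := by
  constructor
  · obtain ⟨f, C, K, h⟩ := hf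
    exact QIAux.oneside T W hTinf hTconn hTlf hTtrans hWconn hWlf hWtrans f C K h
  · rintro ⟨g, C, K, h⟩
    exact QIAux.oneside W T hWinf hWconn hWlf hWtrans hTconn hTlf hTtrans g C K h
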